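/- Let m, m', s, n be integers with 1 ≤ m < m' < s < n, and let p be a real number with p ≥ 1 and p < 2s. Define c = (s−1)^{p+1}/s^{p+1} and the sequence {a_i}_{i=m}^{n−1} by a_i = 1/i^{p+1} for m ≤ i ≤ s, and a_i = c^{i−s}/s^{p+1} for s ≤ i ≤ n−1. Let t < 1 satisfy a_{m'}/a_m ≤ t. Then (Σ_{i=m'}^{n−1} a_i) / (Σ_{i=m}^{m'−1} a_i) ≤ [ 1 + p/m' − (m'/s)^p·( 1 + p/s − (p/(p+1))·(1/(1 − p/(2s))) ) ] / ( t^{−p/(p+1)} − 1 ). -/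

import Mathlib

open Finset

namespace Stmt13Aux
open Real


-- exp-based lower Bernoulli: (1+u)^(-p) ≥ 1 - p*u
lemma aux_bern_neg {u p : ℝ} (hu : 0 ≤ u) (hp : 0 ≤ p) : 1 - p * u ≤ (1 + u) ^ (-p) := by
  have h1 : (0:ℝ) < 1 + u := by linarith
  rw [Real.rpow_def_of_pos h1]
  have hlog : Real.log (1 + u) ≤ u := by
    have := Real.log_le_sub_one_of_pos h1; linarith
  calc 1 - p * u ≤ Real.exp (-(p*u)) := by
        have := Real.add_one_le_exp (-(p*u)); linarith
    _ ≤ Real.exp (Real.log (1 + u) * (-p)) := by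
        apply Real.exp_le_exp.2
        have := mul_le_mul_of_nonneg_left hlog hp
        nlinarith
    _ = Real.exp (Real.log (1 + u) * -p) := rfl

-- lemA : a^(-p) - (a+1)^(-p) ≤ p * a^(-(p+1)) for a ≥ 1, p ≥ 0
lemma aux_lemA {a p : ℝ} (ha : 1 ≤ a) (hp : 0 ≤ p) :
    a ^ (-p) - (a+1) ^ (-p) ≤ p * a ^ (-(p+1)) := by
  have ha0 : (0:ℝ) < a := by linarith
  have heq : a + 1 = a * (1 + 1/a) := by field_simp
  have hsplit : (a+1) ^ (-p) = a ^ (-p) * (1 + 1/a) ^ (-p) := by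
    rw [heq, Real.mul_rpow ha0.le (by positivity)]
  have hb : 1 - p * (1/a) ≤ (1 + 1/a) ^ (-p) := aux_bern_neg (by positivity) hp
  have h2 : a ^ (-p) * (1 - p * (1/a)) ≤ (a+1) ^ (-p) := by
    rw [hsplit]
    exact mul_le_mul_of_nonneg_left hb (Real.rpow_nonneg ha0.le _)
  have h3 : a ^ (-(p+1)) = a ^ (-p) * (1/a) := by
    rw [show -(p+1) = -p + (-1) by ring, Real.rpow_add ha0, Real.rpow_neg_one, one_div]
  rw [h3]; nlinarith [h2]

-- lemB : p * (a+1)^(-(p+1)) ≤ a^(-p) - (a+1)^(-p) for a ≥ 1, p ≥ 1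
lemma aux_lemB {a p : ℝ} (ha : 1 ≤ a) (hp : 1 ≤ p) :
    p * (a+1) ^ (-(p+1)) ≤ a ^ (-p) - (a+1) ^ (-p) := by
  have ha0 : (0:ℝ) < a := by linarith
  have ha1 : (0:ℝ) < a + 1 := by linarith
  have hx0 : (0:ℝ) < 1 + 1/a := by positivity
  have hsplit : a ^ (-p) = (a+1) ^ (-p) * (1 + 1/a) ^ p := by
    have heq : a + 1 = a * (1 + 1/a) := by field_simp
    rw [heq, Real.mul_rpow ha0.le hx0.le, mul_assoc, ← Real.rpow_add hx0]
    simp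
  have hbern : 1 + p * (1/a) ≤ (1 + 1/a) ^ p :=
    one_add_mul_self_le_rpow_one_add (by have := one_div_pos.mpr ha0; linarith) hp
  have hpa : p * (1/(a+1)) ≤ p * (1/a) := by
    apply mul_le_mul_of_nonneg_left _ (by linarith)
    apply one_div_le_one_div_of_le ha0; linarith
  have h2 : (a+1) ^ (-p) * (1 + p * (1/(a+1))) ≤ a ^ (-p) := by
    rw [hsplit]
    apply mul_le_mul_of_nonneg_left _ (Real.rpow_nonneg ha1.le _)
    linarith
  have h3 : (a+1) ^ (-(p+1)) = (a+1) ^ (-p) * (1/(a+1)) := by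
    rw [show -(p+1) = -p + (-1) by ring, Real.rpow_add ha1, Real.rpow_neg_one, one_div]
  rw [h3]; nlinarith [h2]

lemma aux_lemC {x p : ℝ} (hx0 : 0 ≤ x) (hx1 : x ≤ 1) (hp : 1 ≤ p) :
    (1 - x) ^ (p + 1) ≤ 1 - (p + 1) * x + (p + 1) * p * x ^ 2 / 2 := by
  set f : ℝ → ℝ := fun u => (1 - u) ^ (p + 1) - 1 + (p + 1) * u - (p + 1) * p / 2 * u ^ 2
    with hf
  have hq1 : (1:ℝ) ≤ p + 1 := by linarith
  have hD : ∀ u : ℝ, HasDerivAt f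
      ((p + 1) * (1 - u) ^ (p + 1 - 1) * (-1) + (p + 1) - (p + 1) * p / 2 * (2 * u ^ 1)) u := by
    intro u
    have h1 : HasDerivAt (fun u : ℝ => 1 - u) (-1) u := by
      simpa using (hasDerivAt_id u).const_sub 1
    have h2 : HasDerivAt (fun u : ℝ => (1 - u) ^ (p + 1))
        ((p + 1) * (1 - u) ^ (p + 1 - 1) * (-1)) u := by
      have := h1.rpow_const (p := p + 1) (Or.inr hq1)
      convert this using 1; ring
    have h3 : HasDerivAt (fun u : ℝ => (p + 1) * u) (p + 1) u := by
      simpa using (hasDerivAt_id u).const_mul (p + 1)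
    have h4 : HasDerivAt (fun u : ℝ => (p + 1) * p / 2 * u ^ 2)
        ((p + 1) * p / 2 * (2 * u ^ 1)) u := (hasDerivAt_pow 2 u).const_mul _
    exact ((h2.sub_const 1).add h3).sub h4
  have hanti : AntitoneOn f (Set.Icc 0 1) := by
    apply antitoneOn_of_deriv_nonpos (convex_Icc 0 1)
    · exact fun u _ => (hD u).continuousAt.continuousWithinAt
    · exact fun u _ => (hD u).differentiableAt.differentiableWithinAt
    · intro u hu
      rw [interior_Icc] at hu
      rw [(hD u).deriv]
      have hb : 1 + p * (-u) ≤ (1 + -u) ^ p :=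
        one_add_mul_self_le_rpow_one_add (by linarith [hu.2]) hp
      have he : (1 : ℝ) + -u = 1 - u := by ring
      rw [he] at hb
      have hsimp : p + 1 - 1 = p := by ring
      rw [hsimp]
      have : (p + 1) * (1 - p * u) ≤ (p + 1) * (1 - u) ^ p := by nlinarith
      nlinarith
  have h0 : f x ≤ f 0 := hanti (Set.mem_Icc.2 ⟨le_refl 0, zero_le_one⟩)
    (Set.mem_Icc.2 ⟨hx0, hx1⟩) hx0
  have hf0 : f 0 = 0 := by simp [hf, Real.one_rpow]
  rw [hf0] at h0
  simp only [hf] at h0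
  nlinarith [h0]

lemma aux_tel (F : ℕ → ℝ) {u v : ℕ} (h : u ≤ v) :
    ∑ i ∈ Finset.Ico u v, (F (i+1) - F i) = F v - F u := by
  rw [Finset.sum_Ico_eq_sub _ h, Finset.sum_range_sub, Finset.sum_range_sub]
  ring

end Stmt13Aux

open Stmt13Aux



set_option maxHeartbeats 2000000 in
theorem stmt13 (m m' s n : ℕ) (hm : 1 ≤ m) (hmm' : m < m') (hm's : m' < s) (hsn : s < n)
    (p : ℝ) (hp : 1 ≤ p) (hps : p < 2 * (s : ℝ))
    (c : ℝ) (hc : c = ((s : ℝ) - 1) ^ (p + 1) / (s : ℝ) ^ (p + 1))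
    (a : ℕ → ℝ)
    (ha : ∀ i, m ≤ i → i ≤ n - 1 →
      a i = if i ≤ s then 1 / (i : ℝ) ^ (p + 1) else c ^ (i - s) / (s : ℝ) ^ (p + 1))
    (t : ℝ) (ht : t < 1) (hratio : a m' / a m ≤ t) :
    (∑ i ∈ Finset.Ico m' n, a i) / (∑ i ∈ Finset.Ico m m', a i)
      ≤ (1 + p / (m' : ℝ)
          - ((m' : ℝ) / (s : ℝ)) ^ p *
            (1 + p / (s : ℝ) - p / (p + 1) * (1 / (1 - p / (2 * (s : ℝ))))))
        / (t ^ (-(p / (p + 1))) - 1) := by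
  have hp0 : (0:ℝ) < p := by linarith
  have hq0 : (0:ℝ) < p + 1 := by linarith
  have hm1 : (1:ℝ) ≤ (m:ℝ) := by exact_mod_cast hm
  have hm'2 : (2:ℝ) ≤ (m':ℝ) := by exact_mod_cast hmm'.trans_le' hm
  have hm'2' : 2 ≤ m' := by omega
  have hs3 : (3:ℝ) ≤ (s:ℝ) := by exact_mod_cast (by omega : 3 ≤ s)
  have hm0 : (0:ℝ) < (m:ℝ) := by linarith
  have hm'0 : (0:ℝ) < (m':ℝ) := by linarith
  have hs0 : (0:ℝ) < (s:ℝ) := by linarith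
  have hw0 : (0:ℝ) < 1 - p / (2 * (s:ℝ)) := by
    have : p / (2 * (s:ℝ)) < 1 := (div_lt_one (by linarith)).2 hps
    linarith
  -- rewrite the three sums
  have hBsum : ∑ i ∈ Finset.Ico m m', a i = ∑ i ∈ Finset.Ico m m', (i:ℝ) ^ (-(p+1)) := by
    apply Finset.sum_congr rfl
    intro i hi
    obtain ⟨h1, h2⟩ := Finset.mem_Ico.mp hi
    rw [ha i h1 (by omega), if_pos (by omega), Real.rpow_neg (Nat.cast_nonneg i), one_div]
  have hT1sum : ∑ i ∈ Finset.Ico m' s, a i = ∑ i ∈ Finset.Ico m' s, (i:ℝ) ^ (-(p+1)) := by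
    apply Finset.sum_congr rfl
    intro i hi
    obtain ⟨h1, h2⟩ := Finset.mem_Ico.mp hi
    rw [ha i (by omega) (by omega), if_pos (by omega), Real.rpow_neg (Nat.cast_nonneg i), one_div]
  have hT2sum : ∑ i ∈ Finset.Ico s n, a i
      = ∑ i ∈ Finset.Ico s n, c ^ (i - s) * (s:ℝ) ^ (-(p+1)) := by
    apply Finset.sum_congr rfl
    intro i hi
    obtain ⟨h1, h2⟩ := Finset.mem_Ico.mp hi
    rw [ha i (by omega) (by omega)]
    by_cases his : i ≤ s
    · have hise : i = s := le_antisymm his h1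
      rw [hise, if_pos le_rfl, Nat.sub_self, pow_zero, one_mul,
        Real.rpow_neg (Nat.cast_nonneg s), one_div]
    · rw [if_neg his, Real.rpow_neg (Nat.cast_nonneg s), div_eq_mul_inv]
  -- lower bound on the denominator sum
  have hBlow : ((m:ℝ) ^ (-p) - (m':ℝ) ^ (-p)) / p ≤ ∑ i ∈ Finset.Ico m m', (i:ℝ) ^ (-(p+1)) := by
    have htel := aux_tel (fun i : ℕ => -(i:ℝ) ^ (-p) / p) hmm'.le
    have hle : ∑ i ∈ Finset.Ico m m', (-((i:ℕ)+1:ℝ) ^ (-p) / p - (-(i:ℝ) ^ (-p) / p))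
        ≤ ∑ i ∈ Finset.Ico m m', (i:ℝ) ^ (-(p+1)) := by
      apply Finset.sum_le_sum
      intro i hi
      obtain ⟨h1, h2⟩ := Finset.mem_Ico.mp hi
      have hi1 : (1:ℝ) ≤ (i:ℝ) := by exact_mod_cast hm.trans h1
      have hA := aux_lemA (a := (i:ℝ)) hi1 hp0.le
      have he : -((i:ℕ)+1:ℝ) ^ (-p) / p - (-(i:ℝ) ^ (-p) / p)
          = ((i:ℝ) ^ (-p) - ((i:ℝ)+1) ^ (-p)) / p := by push_cast; ring
      rw [he, div_le_iff₀ hp0]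
      linarith [hA]
    calc ((m:ℝ) ^ (-p) - (m':ℝ) ^ (-p)) / p
        = (fun i : ℕ => -(i:ℝ) ^ (-p) / p) m' - (fun i : ℕ => -(i:ℝ) ^ (-p) / p) m := by
          simp only []; ring
      _ = ∑ i ∈ Finset.Ico m m', (-((i:ℕ)+1:ℝ) ^ (-p) / p - (-(i:ℝ) ^ (-p) / p)) := by
          rw [← htel]
          apply Finset.sum_congr rfl
          intro i _
          push_cast
          ring
      _ ≤ _ := hle
  -- upper bound on the first part of the numerator
  have hT1 : ∑ i ∈ Finset.Ico m' s, (i:ℝ) ^ (-(p+1))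
      ≤ (m':ℝ) ^ (-(p+1)) + ((m':ℝ) ^ (-p) - ((s:ℝ) - 1) ^ (-p)) / p := by
    rw [Finset.sum_eq_sum_Ico_succ_bot hm's]
    apply add_le_add le_rfl
    have htel := aux_tel (fun i : ℕ => -((i:ℝ) - 1) ^ (-p) / p) (by omega : m' + 1 ≤ s)
    have hle : ∑ i ∈ Finset.Ico (m'+1) s, (i:ℝ) ^ (-(p+1))
        ≤ ∑ i ∈ Finset.Ico (m'+1) s,
            (-(((i:ℕ)+1:ℝ) - 1) ^ (-p) / p - (-((i:ℝ) - 1) ^ (-p) / p)) := by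
      apply Finset.sum_le_sum
      intro i hi
      obtain ⟨h1, h2⟩ := Finset.mem_Ico.mp hi
      have hi3 : (3:ℝ) ≤ (i:ℝ) := by exact_mod_cast (by omega : 3 ≤ i)
      have hB := aux_lemB (a := (i:ℝ) - 1) (by linarith) hp
      rw [show (i:ℝ) - 1 + 1 = (i:ℝ) by ring] at hB
      have he : -(((i:ℕ)+1:ℝ) - 1) ^ (-p) / p - (-((i:ℝ) - 1) ^ (-p) / p)
          = (((i:ℝ) - 1) ^ (-p) - (i:ℝ) ^ (-p)) / p := by push_cast; ring
      rw [he, le_div_iff₀ hp0]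
      linarith [hB]
    calc ∑ i ∈ Finset.Ico (m'+1) s, (i:ℝ) ^ (-(p+1)) ≤ _ := hle
      _ = ((m':ℝ) ^ (-p) - ((s:ℝ) - 1) ^ (-p)) / p := by
          rw [show (∑ i ∈ Finset.Ico (m'+1) s,
              (-(((i:ℕ)+1:ℝ) - 1) ^ (-p) / p - (-((i:ℝ) - 1) ^ (-p) / p)))
            = ∑ i ∈ Finset.Ico (m'+1) s,
              ((fun i : ℕ => -((i:ℝ) - 1) ^ (-p) / p) (i+1)
                - (fun i : ℕ => -((i:ℝ) - 1) ^ (-p) / p) i) from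
            Finset.sum_congr rfl (fun i _ => by push_cast; ring), htel]
          push_cast
          ring
  -- geometric part
  have hc0 : 0 ≤ c := by
    rw [hc]
    exact div_nonneg (Real.rpow_nonneg (by linarith) _) (Real.rpow_nonneg hs0.le _)
  have hc1 : c < 1 := by
    rw [hc, div_lt_one (Real.rpow_pos_of_pos hs0 _)]
    exact Real.rpow_lt_rpow (by linarith) (by linarith) hq0
  have h1c : (p + 1) / (s:ℝ) * (1 - p / (2 * (s:ℝ))) ≤ 1 - c := by
    have hx := aux_lemC (x := 1 / (s:ℝ)) (by positivity)
      (by rw [div_le_one hs0]; linarith) hp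
    have hceq : c = (1 - 1 / (s:ℝ)) ^ (p + 1) := by
      rw [hc, ← Real.div_rpow (by linarith) hs0.le]
      congr 1
      field_simp
    have e1 : (p + 1) / (s:ℝ) * (1 - p / (2 * (s:ℝ)))
        = (p + 1) * (1 / (s:ℝ)) - (p + 1) * p * (1 / (s:ℝ)) ^ 2 / 2 := by
      field_simp
    rw [e1, hceq]
    linarith [hx]
  have h1c0 : (0:ℝ) < 1 - c := by
    have : (0:ℝ) < (p + 1) / (s:ℝ) * (1 - p / (2 * (s:ℝ))) := by positivity
    linarith
  have hgeo : ∑ j ∈ Finset.range (n - s), c ^ j ≤ 1 / (1 - c) := by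
    rw [geom_sum_eq (by linarith : c ≠ 1)]
    rw [show (c ^ (n - s) - 1) / (c - 1) = (1 - c ^ (n - s)) / (1 - c) by
      rw [← neg_div_neg_eq]; ring_nf]
    have hnum : 1 - c ^ (n - s) ≤ 1 := by nlinarith [pow_nonneg hc0 (n - s)]
    exact (div_le_div_iff_of_pos_right h1c0).2 hnum
  have hT2sum' : ∑ i ∈ Finset.Ico s n, c ^ (i - s) * (s:ℝ) ^ (-(p+1))
      = (∑ j ∈ Finset.range (n - s), c ^ j) * (s:ℝ) ^ (-(p+1)) := by
    rw [Finset.sum_Ico_eq_sum_range, ← Finset.sum_mul]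
    congr 1
    apply Finset.sum_congr rfl
    intro j _
    congr 2
    omega
  have hT2 : (∑ j ∈ Finset.range (n - s), c ^ j) * (s:ℝ) ^ (-(p+1))
      ≤ (s:ℝ) ^ (-p) / ((p + 1) * (1 - p / (2 * (s:ℝ)))) := by
    have hs1 : (∑ j ∈ Finset.range (n - s), c ^ j) * (s:ℝ) ^ (-(p+1))
        ≤ (1 / (1 - c)) * (s:ℝ) ^ (-(p+1)) :=
      mul_le_mul_of_nonneg_right hgeo (Real.rpow_nonneg hs0.le _)
    have hden0 : (0:ℝ) < (p + 1) / (s:ℝ) * (1 - p / (2 * (s:ℝ))) := by positivity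
    have hs2 : 1 / (1 - c) ≤ 1 / ((p + 1) / (s:ℝ) * (1 - p / (2 * (s:ℝ)))) :=
      one_div_le_one_div_of_le hden0 h1c
    have hs4 : (s:ℝ) ^ (-p) = (s:ℝ) * (s:ℝ) ^ (-(p+1)) := by
      rw [show -p = 1 + -(p+1) by ring, Real.rpow_add hs0, Real.rpow_one]
    have hs3' : (1 / ((p + 1) / (s:ℝ) * (1 - p / (2 * (s:ℝ))))) * (s:ℝ) ^ (-(p+1))
        = (s:ℝ) ^ (-p) / ((p + 1) * (1 - p / (2 * (s:ℝ)))) := by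
      rw [hs4]
      field_simp
    calc (∑ j ∈ Finset.range (n - s), c ^ j) * (s:ℝ) ^ (-(p+1))
        ≤ (1 / (1 - c)) * (s:ℝ) ^ (-(p+1)) := hs1
      _ ≤ (1 / ((p + 1) / (s:ℝ) * (1 - p / (2 * (s:ℝ))))) * (s:ℝ) ^ (-(p+1)) :=
          mul_le_mul_of_nonneg_right hs2 (Real.rpow_nonneg hs0.le _)
      _ = _ := hs3'
  have hsb' : (s:ℝ) ^ (-(p+1)) ≤ (((s:ℝ) - 1) ^ (-p) - (s:ℝ) ^ (-p)) / p := by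
    have hB := aux_lemB (a := (s:ℝ) - 1) (by linarith) hp
    rw [show (s:ℝ) - 1 + 1 = (s:ℝ) by ring] at hB
    rw [le_div_iff₀ hp0]
    linarith [hB]
  -- the key quantity A
  set A : ℝ := (m':ℝ) ^ (-p) / p + (m':ℝ) ^ (-(p+1)) - (s:ℝ) ^ (-p) / p - (s:ℝ) ^ (-(p+1))
      + (s:ℝ) ^ (-p) / ((p + 1) * (1 - p / (2 * (s:ℝ)))) with hA
  have hTsplit : ∑ i ∈ Finset.Ico m' n, a i
      = (∑ i ∈ Finset.Ico m' s, (i:ℝ) ^ (-(p+1)))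
        + (∑ j ∈ Finset.range (n - s), c ^ j) * (s:ℝ) ^ (-(p+1)) := by
    rw [← Finset.sum_Ico_consecutive a hm's.le hsn.le, hT1sum, hT2sum, hT2sum']
  have hTA : ∑ i ∈ Finset.Ico m' n, a i ≤ A := by
    rw [hTsplit, hA]
    have e1 : ((m':ℝ) ^ (-p) - ((s:ℝ) - 1) ^ (-p)) / p
        = (m':ℝ) ^ (-p) / p - (s:ℝ) ^ (-p) / p
          - ((((s:ℝ) - 1) ^ (-p) - (s:ℝ) ^ (-p)) / p) := by ring
    linarith [hT1, hT2, hsb']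
  have hTnonneg : 0 ≤ ∑ i ∈ Finset.Ico m' n, a i := by
    rw [hTsplit]
    apply add_nonneg
    · exact Finset.sum_nonneg fun i _ => Real.rpow_nonneg (Nat.cast_nonneg i) _
    · exact mul_nonneg (Finset.sum_nonneg fun j _ => pow_nonneg hc0 j)
        (Real.rpow_nonneg hs0.le _)
  have hA0 : 0 ≤ A := le_trans hTnonneg hTA
  -- bounds involving t
  have ham : a m = 1 / (m:ℝ) ^ (p+1) := by
    rw [ha m le_rfl (by omega), if_pos (by omega)]
  have ham' : a m' = 1 / (m':ℝ) ^ (p+1) := by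
    rw [ha m' (by omega) (by omega), if_pos (by omega)]
  have htpos : 0 < t := by
    have : 0 < a m' / a m := by
      rw [ham, ham']
      positivity
    linarith [hratio, this]
  have hrt : ((m:ℝ) / (m':ℝ)) ^ (p+1) ≤ t := by
    have e : (1 / (m':ℝ) ^ (p+1)) / (1 / (m:ℝ) ^ (p+1)) = ((m:ℝ) / (m':ℝ)) ^ (p+1) := by
      rw [Real.div_rpow hm0.le hm'0.le]
      have h1 : (m:ℝ) ^ (p+1) ≠ 0 := (Real.rpow_pos_of_pos hm0 _).ne'
      have h2 : (m':ℝ) ^ (p+1) ≠ 0 := (Real.rpow_pos_of_pos hm'0 _).ne'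
      field_simp
    rw [ham, ham', e] at hratio
    exact hratio
  have hD1 : t ^ (-(p / (p + 1))) ≤ ((m:ℝ) / (m':ℝ)) ^ (-p) := by
    have hb0 : (0:ℝ) < ((m:ℝ) / (m':ℝ)) ^ (p+1) :=
      Real.rpow_pos_of_pos (div_pos hm0 hm'0) _
    have h1 : t ^ (-(p / (p + 1))) ≤ (((m:ℝ) / (m':ℝ)) ^ (p+1)) ^ (-(p / (p + 1))) :=
      Real.rpow_le_rpow_of_nonpos hb0 hrt
        (neg_nonpos.mpr (by positivity : (0:ℝ) ≤ p / (p+1)))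
    have h2 : (((m:ℝ) / (m':ℝ)) ^ (p+1)) ^ (-(p / (p + 1))) = ((m:ℝ) / (m':ℝ)) ^ (-p) := by
      rw [← Real.rpow_mul (div_pos hm0 hm'0).le]
      congr 1
      field_simp
    rw [h2] at h1
    exact h1
  have hD2 : ((m:ℝ) / (m':ℝ)) ^ (-p) = (m':ℝ) ^ p * (m:ℝ) ^ (-p) := by
    rw [Real.div_rpow hm0.le hm'0.le, Real.rpow_neg hm'0.le, div_eq_mul_inv, inv_inv, mul_comm]
  have hone : (m':ℝ) ^ p * (m':ℝ) ^ (-p) = 1 := by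
    rw [← Real.rpow_add hm'0]
    simp
  have hDup : t ^ (-(p / (p + 1))) - 1
      ≤ (m':ℝ) ^ p * p * (∑ i ∈ Finset.Ico m m', a i) := by
    have hBl : (m:ℝ) ^ (-p) - (m':ℝ) ^ (-p) ≤ (∑ i ∈ Finset.Ico m m', a i) * p := by
      rw [hBsum]
      exact (div_le_iff₀ hp0).1 hBlow
    have h3 : t ^ (-(p / (p + 1))) - 1 ≤ (m':ℝ) ^ p * ((m:ℝ) ^ (-p) - (m':ℝ) ^ (-p)) := by
      rw [mul_sub, hone]
      have := hD1.trans_eq hD2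
      linarith
    have h4 : (m':ℝ) ^ p * ((m:ℝ) ^ (-p) - (m':ℝ) ^ (-p))
        ≤ (m':ℝ) ^ p * ((∑ i ∈ Finset.Ico m m', a i) * p) :=
      mul_le_mul_of_nonneg_left hBl (Real.rpow_nonneg hm'0.le _)
    calc t ^ (-(p / (p + 1))) - 1 ≤ _ := h3
      _ ≤ _ := h4
      _ = (m':ℝ) ^ p * p * (∑ i ∈ Finset.Ico m m', a i) := by ring
  have hDpos : 0 < t ^ (-(p / (p + 1))) - 1 := by
    have h5 : 1 < t ^ (-(p / (p + 1))) := by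
      apply (Real.one_lt_rpow_iff_of_pos htpos).2
      right
      exact ⟨ht, neg_neg_iff_pos.mpr (by positivity)⟩
    linarith
  have hBpos : 0 < ∑ i ∈ Finset.Ico m m', a i := by
    rw [hBsum]
    apply Finset.sum_pos
    · intro i hi
      obtain ⟨h1, _⟩ := Finset.mem_Ico.mp hi
      have : (0:ℝ) < (i:ℝ) := by
        have : 1 ≤ i := hm.trans h1
        exact_mod_cast Nat.pos_of_ne_zero (by omega)
      exact Real.rpow_pos_of_pos this _
    · exact ⟨m, Finset.mem_Ico.2 ⟨le_rfl, hmm'⟩⟩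
  -- numerator identity
  set N : ℝ := 1 + p / (m':ℝ)
      - ((m':ℝ) / (s:ℝ)) ^ p * (1 + p / (s:ℝ) - p / (p + 1) * (1 / (1 - p / (2 * (s:ℝ)))))
    with hN
  have i1 : ((m':ℝ) / (s:ℝ)) ^ p = ((m':ℝ) ^ (-p))⁻¹ * (s:ℝ) ^ (-p) := by
    rw [Real.div_rpow hm'0.le hs0.le, Real.rpow_neg hm'0.le, Real.rpow_neg hs0.le,
      inv_inv, div_eq_mul_inv]
  have i3 : (m':ℝ) ^ (-(p+1)) = (m':ℝ) ^ (-p) / (m':ℝ) := by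
    rw [show -(p+1) = -p + -1 by ring, Real.rpow_add hm'0, Real.rpow_neg_one, div_eq_mul_inv]
  have i4 : (s:ℝ) ^ (-(p+1)) = (s:ℝ) ^ (-p) / (s:ℝ) := by
    rw [show -(p+1) = -p + -1 by ring, Real.rpow_add hs0, Real.rpow_neg_one, div_eq_mul_inv]
  have hX0 : (m':ℝ) ^ (-p) ≠ 0 := (Real.rpow_pos_of_pos hm'0 _).ne'
  have hNA : N * (m':ℝ) ^ (-p) / p = A := by
    have hz1 : (m':ℝ) ≠ 0 := hm'0.ne'
    have hz2 : (s:ℝ) ≠ 0 := hs0.ne'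
    have hz3 : p ≠ 0 := hp0.ne'
    have hz4 : (p:ℝ) + 1 ≠ 0 := hq0.ne'
    have hz5 : 1 - p / (2 * (s:ℝ)) ≠ 0 := hw0.ne'
    rw [hN, hA, i1, i3, i4]
    field_simp
    ring
  -- final assembly
  rw [div_le_div_iff₀ hBpos hDpos]
  calc (∑ i ∈ Finset.Ico m' n, a i) * (t ^ (-(p / (p + 1))) - 1)
      ≤ A * (t ^ (-(p / (p + 1))) - 1) :=
        mul_le_mul_of_nonneg_right hTA hDpos.le
    _ ≤ A * ((m':ℝ) ^ p * p * (∑ i ∈ Finset.Ico m m', a i)) :=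
        mul_le_mul_of_nonneg_left hDup hA0
    _ = N * (∑ i ∈ Finset.Ico m m', a i) := by
        have hone' : (m':ℝ) ^ (-p) * (m':ℝ) ^ p = 1 := by rw [mul_comm]; exact hone
        calc A * ((m':ℝ) ^ p * p * (∑ i ∈ Finset.Ico m m', a i))
            = N * ((m':ℝ) ^ (-p) * (m':ℝ) ^ p) * (p / p) * (∑ i ∈ Finset.Ico m m', a i) := by
              rw [← hNA]; ring
          _ = N * (∑ i ∈ Finset.Ico m m', a i) := by
              rw [div_self hp0.ne', hone']; ring
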